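/- arXiv:2209.03492 — 5 statements merged into one kernel-verified Lean document; each statement's English description precedes it below -/
import Mathlib

section
/- The matrix M of size (ℓ+1)×(ℓ+1) with entries M(i,j) = C(b−j, i) (binomial coefficient, rows i = 0,…,ℓ, columns j = 0,…,ℓ), where b > ℓ, has determinant equal to ±1 (i.e., its determinant is a unit in ℤ). -/
open Finset Matrix

theorem stmt_0 (ℓ b : ℕ) (hb : b > ℓ) :
    IsUnit (Matrix.det (Matrix.of fun i j : Fin (ℓ + 1) =>
      (Nat.choose (b - (j : ℕ)) (i : ℕ) : ℤ))) := by
  have hlb : ℓ ≤ b := le_of_lt hb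
  set A : Matrix (Fin (ℓ+1)) (Fin (ℓ+1)) ℤ :=
    Matrix.of fun i k => if (k : ℕ) ≤ (i : ℕ) then ((b - ℓ).choose ((i : ℕ) - k) : ℤ) else 0
    with hA
  set B : Matrix (Fin (ℓ+1)) (Fin (ℓ+1)) ℤ :=
    Matrix.of fun k j => ((ℓ - (j : ℕ)).choose (k : ℕ) : ℤ) with hB
  have key : (Matrix.of fun i j : Fin (ℓ + 1) =>
      (Nat.choose (b - (j : ℕ)) (i : ℕ) : ℤ)) = A * B := by
    ext i j
    have hj : (j : ℕ) ≤ ℓ := Nat.lt_succ_iff.mp j.isLt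
    have hi : (i : ℕ) ≤ ℓ := Nat.lt_succ_iff.mp i.isLt
    have hsplit : b - (j : ℕ) = (ℓ - (j:ℕ)) + (b - ℓ) := by omega
    have hnat : (b - (j:ℕ)).choose (i:ℕ)
        = ∑ k ∈ Finset.range (ℓ+1),
            (if k ≤ (i:ℕ) then (b - ℓ).choose ((i:ℕ) - k) else 0) * (ℓ - (j:ℕ)).choose k := by
      rw [hsplit, Nat.add_choose_eq, Finset.Nat.sum_antidiagonal_eq_sum_range_succ_mk]
      refine (Finset.sum_congr rfl (fun k hk => ?_)).trans
        (Finset.sum_subset (Finset.range_subset_range.mpr (by omega : (i:ℕ)+1 ≤ ℓ+1))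
          (fun k _ hk => ?_))
      · simp only [Finset.mem_range, Nat.lt_succ_iff] at hk
        rw [if_pos hk, mul_comm]
      · simp only [Finset.mem_range, Nat.lt_succ_iff] at hk
        rw [if_neg hk, zero_mul]
    have : ((b - (j:ℕ)).choose (i:ℕ) : ℤ)
        = ∑ k ∈ Finset.range (ℓ+1),
            (if k ≤ (i:ℕ) then ((b - ℓ).choose ((i:ℕ) - k) : ℤ) else 0)
              * ((ℓ - (j:ℕ)).choose k : ℤ) := by
      rw [hnat]; push_cast [apply_ite (Nat.cast : ℕ → ℤ)]; ring_nf
    simp only [Matrix.mul_apply, Matrix.of_apply, hA, hB]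
    rw [this, ← Fin.sum_univ_eq_sum_range
      (fun k => (if k ≤ (i:ℕ) then ((b - ℓ).choose ((i:ℕ) - k) : ℤ) else 0)
        * ((ℓ - (j:ℕ)).choose k : ℤ))]
  rw [key, Matrix.det_mul]
  have hAdet : A.det = 1 := by
    rw [Matrix.det_of_lowerTriangular A (by
      intro i k h
      have h' : (i : ℕ) < (k : ℕ) := h
      simp only [hA, Matrix.of_apply]
      rw [if_neg (by omega)])]
    simp [hA]
  have hBunit : IsUnit B.det := by
    have h1 : (B.submatrix id (Fin.revPerm : Equiv.Perm (Fin (ℓ+1)))).det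
        = Equiv.Perm.sign (Fin.revPerm : Equiv.Perm (Fin (ℓ+1))) * B.det :=
      Matrix.det_permute' _ _
    have h2 : (B.submatrix id (Fin.revPerm : Equiv.Perm (Fin (ℓ+1)))).det = 1 := by
      rw [Matrix.det_of_upperTriangular (M := B.submatrix id ⇑Fin.revPerm) (by
        intro k j h
        simp only [Matrix.submatrix_apply, hB, Matrix.of_apply, id_eq, Fin.revPerm_apply,
          Fin.val_rev]
        have hj : (j : ℕ) ≤ ℓ := Nat.lt_succ_iff.mp j.isLt
        have : ℓ - (ℓ + 1 - ((j:ℕ) + 1)) = (j : ℕ) := by omega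
        have h' : (j : ℕ) < (k : ℕ) := h
        rw [this, Nat.choose_eq_zero_of_lt h']
        simp)]
      refine Finset.prod_eq_one (fun k _ => ?_)
      simp only [Matrix.submatrix_apply, hB, Matrix.of_apply, id_eq, Fin.revPerm_apply,
        Fin.val_rev]
      have hk : (k : ℕ) ≤ ℓ := Nat.lt_succ_iff.mp k.isLt
      have : ℓ - (ℓ + 1 - ((k:ℕ) + 1)) = (k : ℕ) := by omega
      rw [this, Nat.choose_self]; simp
    rw [h2] at h1
    have h3 : IsUnit ((Equiv.Perm.sign (Fin.revPerm : Equiv.Perm (Fin (ℓ+1))) : ℤ) * B.det) := by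
      rw [← h1]; exact isUnit_one
    exact isUnit_of_mul_isUnit_right h3
  rw [hAdet, one_mul]
  exact hBunit
end

section
/- Let M be a block matrix of the form M = [[a, b^T, c^T],[b, B, 0],[c, 0, C]] where a is a scalar, B is m×m, C is n×n, and b ∈ ℝ^m, c ∈ ℝ^n. Write a = a₁ + a₂. Then det(xI − M) = det(xI_m − B)·det(x I_{n+1} − [[a₂, c^T],[c, C]]) + ( det(x I_{m+1} − [[a₁, b^T],[b, B]]) − x·det(xI_m − B) )·det(xI_n − C). -/
open Polynomial

/-- The block matrix `[[a, bᵀ, cᵀ], [b, B, 0], [c, 0, C]]`. -/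
def bigBlock {m n : ℕ} (a : ℝ) (b : Fin m → ℝ) (c : Fin n → ℝ)
    (B : Matrix (Fin m) (Fin m) ℝ) (C : Matrix (Fin n) (Fin n) ℝ) :
    Matrix (Unit ⊕ (Fin m ⊕ Fin n)) (Unit ⊕ (Fin m ⊕ Fin n)) ℝ :=
  Matrix.of fun i j =>
    match i, j with
    | .inl _, .inl _ => a
    | .inl _, .inr (.inl k) => b k
    | .inl _, .inr (.inr k) => c k
    | .inr (.inl k), .inl _ => b k
    | .inr (.inr k), .inl _ => c k
    | .inr (.inl k), .inr (.inl l) => B k l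
    | .inr (.inr k), .inr (.inr l) => C k l
    | _, _ => 0

/-- The bordered matrix `[[a, bᵀ], [b, B]]`. -/
def corner {m : ℕ} (a : ℝ) (b : Fin m → ℝ) (B : Matrix (Fin m) (Fin m) ℝ) :
    Matrix (Unit ⊕ Fin m) (Unit ⊕ Fin m) ℝ :=
  Matrix.of fun i j =>
    match i, j with
    | .inl _, .inl _ => a
    | .inl _, .inr k => b k
    | .inr k, .inl _ => b k
    | .inr k, .inr l => B k l

noncomputable section StmtAux

open Matrix

variable {m n : ℕ}

private def e1 (m n : ℕ) : (Unit ⊕ (Fin m ⊕ Fin n)) ≃ ((Unit ⊕ Fin m) ⊕ Fin n) :=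
  (Equiv.sumAssoc _ _ _).symm

private def e2 (m n : ℕ) : (Unit ⊕ (Fin m ⊕ Fin n)) ≃ (Fin m ⊕ (Unit ⊕ Fin n)) :=
  ((Equiv.refl Unit).sumCongr (Equiv.sumComm _ _)).trans
    ((Equiv.sumAssoc _ _ _).symm.trans (Equiv.sumComm _ _))

@[simp] private lemma e1_a (u : Unit) : e1 m n (.inl u) = .inl (.inl u) := rfl
@[simp] private lemma e1_b (k : Fin m) : e1 m n (.inr (.inl k)) = .inl (.inr k) := rfl
@[simp] private lemma e1_c (k : Fin n) : e1 m n (.inr (.inr k)) = .inr k := rfl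
@[simp] private lemma e2_a (u : Unit) : e2 m n (.inl u) = .inr (.inl u) := rfl
@[simp] private lemma e2_b (k : Fin m) : e2 m n (.inr (.inl k)) = .inl k := rfl
@[simp] private lemma e2_c (k : Fin n) : e2 m n (.inr (.inr k)) = .inr (.inr k) := rfl

end StmtAux

theorem stmt_8 {m n : ℕ} (a a₁ a₂ : ℝ) (ha : a = a₁ + a₂)
    (b : Fin m → ℝ) (c : Fin n → ℝ)
    (B : Matrix (Fin m) (Fin m) ℝ) (C : Matrix (Fin n) (Fin n) ℝ) :
    (bigBlock a b c B C).charpoly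
      = B.charpoly * (corner a₂ c C).charpoly
        + ((corner a₁ b B).charpoly - X * B.charpoly) * C.charpoly := by
  classical
  subst ha
  set M : Matrix (Unit ⊕ (Fin m ⊕ Fin n)) (Unit ⊕ (Fin m ⊕ Fin n)) (Polynomial ℝ) := Matrix.charmatrix (bigBlock (a₁ + a₂) b c B C) with hMdef
  -- the two pieces of row (inl ())
  set v₁ : (Unit ⊕ (Fin m ⊕ Fin n)) → Polynomial ℝ :=
    Sum.elim (fun _ => X - Polynomial.C a₁)
      (Sum.elim (fun k => -Polynomial.C (b k)) (fun _ => 0)) with hv₁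
  set v₂ : (Unit ⊕ (Fin m ⊕ Fin n)) → Polynomial ℝ :=
    Sum.elim (fun _ => -Polynomial.C a₂)
      (Sum.elim (fun _ => 0) (fun k => -Polynomial.C (c k))) with hv₂
  set w₂ : (Unit ⊕ (Fin m ⊕ Fin n)) → Polynomial ℝ :=
    Sum.elim (fun _ => 0)
      (Sum.elim (fun k => -Polynomial.C (b k)) (fun _ => 0)) with hw₂
  have hsplit : M = M.updateRow (Sum.inl ()) (v₁ + v₂) := by
    refine Matrix.ext fun i j => ?_
    rcases i with ⟨⟩ | (k | k) <;> rcases j with ⟨⟩ | (l | l) <;>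
      simp [hMdef, hv₁, hv₂, Matrix.updateRow_apply, Matrix.charmatrix_apply,
        Matrix.diagonal_apply, bigBlock, map_add, Sum.inl.injEq, Sum.inr.injEq] <;>
      ring
  set M₁ := M.updateRow (Sum.inl ()) v₁ with hM₁
  set M₂ := M.updateRow (Sum.inl ()) v₂ with hM₂
  have hdetM : M.det = M₁.det + M₂.det := by
    conv_lhs => rw [hsplit]
    rw [Matrix.det_updateRow_add]
  -- Step A: det M₁
  have hA : M₁.det = (corner a₁ b B).charpoly * C.charpoly := by
    have h1 : M₁ = ((Matrix.fromBlocks (Matrix.charmatrix (corner a₁ b B)) 0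
          (Matrix.of fun (k : Fin n) (j : Unit ⊕ Fin m) =>
            Sum.elim (fun _ => -Polynomial.C (c k)) (fun _ => (0:Polynomial ℝ)) j)
          (Matrix.charmatrix C)).submatrix (e1 m n) (e1 m n)) := by
      refine Matrix.ext fun i j => ?_
      rcases i with ⟨⟩ | (k | k) <;> rcases j with ⟨⟩ | (l | l) <;>
        simp [hM₁, hMdef, hv₁, Matrix.updateRow_apply, Matrix.charmatrix_apply,
          Matrix.diagonal_apply, bigBlock, corner, Matrix.submatrix_apply,
          Sum.inl.injEq, Sum.inr.injEq] <;>
      first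
        | rfl
        | (split_ifs with h <;> simp_all)
        | (rintro h; simp at h)
    rw [h1, Matrix.det_submatrix_equiv_self, Matrix.det_fromBlocks_zero₁₂]
    rfl
  -- Step B: split det M₂ along column (inl ())
  have hsplit2 : M₂ = M₂.updateCol (Sum.inl ()) (v₂ + w₂) := by
    refine Matrix.ext fun i j => ?_
    rcases i with ⟨⟩ | (k | k) <;> rcases j with ⟨⟩ | (l | l) <;>
      simp [hM₂, hMdef, hv₂, hw₂, Matrix.updateCol_apply, Matrix.updateRow_apply,
        Matrix.charmatrix_apply, Matrix.diagonal_apply, bigBlock]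
  set M₂₁ := M₂.updateCol (Sum.inl ()) v₂ with hM₂₁
  set M₂₂ := M₂.updateCol (Sum.inl ()) w₂ with hM₂₂
  have hdetM₂ : M₂.det = M₂₁.det + M₂₂.det := by
    conv_lhs => rw [hsplit2]
    rw [Matrix.det_updateCol_add]
  -- Step B2 : det M₂₂ = 0
  have hB2 : M₂₂.det = 0 := by
    have h2 : M₂₂ = ((Matrix.fromBlocks
          (Matrix.of fun (i j : Unit ⊕ Fin m) =>
            match i, j with
            | .inl _, _ => (0:Polynomial ℝ)
            | .inr k, .inl _ => -Polynomial.C (b k)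
            | .inr k, .inr l => Matrix.charmatrix B k l)
          (Matrix.of fun (i : Unit ⊕ Fin m) (k : Fin n) =>
            Sum.elim (fun _ => -Polynomial.C (c k)) (fun _ => (0:Polynomial ℝ)) i)
          0 (Matrix.charmatrix C)).submatrix (e1 m n) (e1 m n)) := by
      refine Matrix.ext fun i j => ?_
      rcases i with ⟨⟩ | (k | k) <;> rcases j with ⟨⟩ | (l | l) <;>
        simp [hM₂₂, hM₂, hMdef, hv₂, hw₂, Matrix.updateCol_apply,
          Matrix.updateRow_apply, Matrix.charmatrix_apply,
          Matrix.diagonal_apply, bigBlock, Matrix.submatrix_apply,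
          Sum.inl.injEq, Sum.inr.injEq] <;>
      first
        | rfl
        | (split_ifs with h <;> simp_all)
        | (rintro h; simp at h)
    rw [h2, Matrix.det_submatrix_equiv_self, Matrix.det_fromBlocks_zero₂₁]
    have : (Matrix.of fun (i j : Unit ⊕ Fin m) =>
        match i, j with
        | .inl _, _ => (0:Polynomial ℝ)
        | .inr k, .inl _ => -Polynomial.C (b k)
        | .inr k, .inr l => Matrix.charmatrix B k l).det = 0 := by
      apply Matrix.det_eq_zero_of_row_eq_zero (Sum.inl ())
      rintro (⟨⟩ | l) <;> rfl
    rw [this, zero_mul]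
  -- Step B1 : det M₂₁
  set N : Matrix (Unit ⊕ Fin n) (Unit ⊕ Fin n) (Polynomial ℝ) :=
    Matrix.of fun i j =>
      match i, j with
      | .inl _, .inl _ => -Polynomial.C a₂
      | .inl _, .inr l => -Polynomial.C (c l)
      | .inr k, .inl _ => -Polynomial.C (c k)
      | .inr k, .inr l => Matrix.charmatrix C k l with hN
  have hB1 : M₂₁.det = B.charpoly * N.det := by
    have h3 : M₂₁ = ((Matrix.fromBlocks (Matrix.charmatrix B) 0 0 N).submatrix
        (e2 m n) (e2 m n)) := by
      refine Matrix.ext fun i j => ?_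
      rcases i with ⟨⟩ | (k | k) <;> rcases j with ⟨⟩ | (l | l) <;>
        simp [hM₂₁, hM₂, hMdef, hv₂, hN, Matrix.updateCol_apply,
          Matrix.updateRow_apply, Matrix.charmatrix_apply,
          Matrix.diagonal_apply, bigBlock, Matrix.submatrix_apply,
          Sum.inl.injEq, Sum.inr.injEq] <;>
      first
        | rfl
        | (split_ifs with h <;> simp_all)
        | (rintro h; simp at h)
    rw [h3, Matrix.det_submatrix_equiv_self, Matrix.det_fromBlocks_zero₁₂]
    rfl
  -- Step C : det N = charpoly (corner a₂ c C) - X * charpoly C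
  have hC : N.det = (corner a₂ c C).charpoly - X * C.charpoly := by
    have hsplit3 : Matrix.charmatrix (corner a₂ c C)
        = N.updateRow (Sum.inl ()) (N (Sum.inl ()) + Sum.elim (fun _ => (X:Polynomial ℝ)) 0) := by
      refine Matrix.ext fun i j => ?_
      rcases i with ⟨⟩ | k <;> rcases j with ⟨⟩ | l <;>
        simp [hN, Matrix.updateRow_apply, Matrix.charmatrix_apply,
          Matrix.diagonal_apply, corner] <;> ring
    have hXdet : (N.updateRow (Sum.inl ()) (Sum.elim (fun _ => (X:Polynomial ℝ)) 0)).det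
        = X * C.charpoly := by
      have h4 : N.updateRow (Sum.inl ()) (Sum.elim (fun _ => (X:Polynomial ℝ)) 0)
          = Matrix.fromBlocks (Matrix.of fun (_ _ : Unit) => (X:Polynomial ℝ)) 0
            (Matrix.of fun (k : Fin n) (_ : Unit) => -Polynomial.C (c k))
            (Matrix.charmatrix C) := by
        refine Matrix.ext fun i j => ?_
        rcases i with ⟨⟩ | k <;> rcases j with ⟨⟩ | l <;>
          simp [hN, Matrix.updateRow_apply]
      rw [h4, Matrix.det_fromBlocks_zero₁₂, Matrix.det_unique]
      rfl
    have := congrArg Matrix.det hsplit3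
    rw [Matrix.det_updateRow_add, Matrix.updateRow_eq_self, hXdet] at this
    have hcc : (corner a₂ c C).charpoly = ((corner a₂ c C).charmatrix).det := rfl
    rw [hcc, this]
    ring
  -- Assemble
  have hfinal : (bigBlock (a₁ + a₂) b c B C).charpoly = M.det := rfl
  rw [hfinal, hdetM, hdetM₂, hA, hB1, hB2, hC]
  ring
end

section
/- Fix natural numbers n and b with b ≤ n, and rational numbers ω(i,j) for 0 ≤ i ≤ b, 0 ≤ j ≤ n−b (set ω(i,j)=0 outside this range). Define c(k,ℓ) = Σ_i C(b−i, k)·ω(i, ℓ−i) for 0 ≤ k ≤ b and 0 ≤ ℓ ≤ n. Then the values ω(i,j) are uniquely determined by the values c(k,ℓ): if two families ω and ω' yield the same c(k,ℓ) for all k,ℓ, then ω = ω'. -/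
theorem stmt_9 (n b : ℕ) (hb : b ≤ n) (ω ω' : ℕ → ℕ → ℚ)
    (hω : ∀ i j, (b < i ∨ n - b < j) → ω i j = 0)
    (hω' : ∀ i j, (b < i ∨ n - b < j) → ω' i j = 0)
    (hc : ∀ k ℓ, k ≤ b → ℓ ≤ n →
      (∑ i ∈ Finset.range (ℓ + 1), (Nat.choose (b - i) k : ℚ) * ω i (ℓ - i))
        = ∑ i ∈ Finset.range (ℓ + 1), (Nat.choose (b - i) k : ℚ) * ω' i (ℓ - i)) :
    ω = ω' := by
  have key : ∀ i j, ω i j = ω' i j := by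
    intro i
    induction i using Nat.strong_induction_on with
    | _ i ih =>
      intro j
      by_cases hi : b < i
      · rw [hω i j (Or.inl hi), hω' i j (Or.inl hi)]
      push_neg at hi
      by_cases hj : n - b < j
      · rw [hω i j (Or.inr hj), hω' i j (Or.inr hj)]
      push_neg at hj
      have hsum := hc (b - i) (i + j) (by omega) (by omega)
      have hz : ∑ i' ∈ Finset.range (i + j + 1),
          ((Nat.choose (b - i') (b - i) : ℚ) * ω i' (i + j - i')
            - (Nat.choose (b - i') (b - i) : ℚ) * ω' i' (i + j - i')) = 0 := by
        rw [Finset.sum_sub_distrib, hsum, sub_self]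
      rw [Finset.sum_eq_single i] at hz
      · rw [Nat.choose_self, Nat.add_sub_cancel_left] at hz
        push_cast at hz
        linarith
      · intro i' _ hne
        rcases lt_or_gt_of_ne hne with h | h
        · rw [ih i' h, sub_self]
        · by_cases hib : i' ≤ b
          · rw [Nat.choose_eq_zero_of_lt (by omega : b - i' < b - i)]
            push_cast
            ring
          · rw [hω i' _ (Or.inl (by omega)), hω' i' _ (Or.inl (by omega)), sub_self]
      · intro h
        exact absurd (Finset.mem_range.mpr (by omega)) h
  funext i j
  exact key i j
end

section
/- Fix natural numbers n and b with b ≤ n. For families ω(i,j) of rationals (0 ≤ i ≤ b, 0 ≤ j ≤ n−b, zero otherwise), define c(k,ℓ) = Σ_i C(b−i, k)·ω(i, ℓ−i) and c'(k,ℓ) = Σ_j C(n−b−j, k)·ω(ℓ−j, j). If two families ω and ω̃ satisfy c(k,ℓ) = c̃(k,ℓ) for all 0 ≤ k ≤ b and all ℓ, then c'(k,ℓ) = c̃'(k,ℓ) for all 0 ≤ k ≤ n−b and all ℓ. -/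
theorem stmt_10 (n b : ℕ) (hb : b ≤ n) (ω ω' : ℕ → ℕ → ℚ)
    (hω : ∀ i j, (b < i ∨ n - b < j) → ω i j = 0)
    (hω' : ∀ i j, (b < i ∨ n - b < j) → ω' i j = 0)
    (hc : ∀ k ℓ, k ≤ b →
      (∑ i ∈ Finset.range (ℓ + 1), (Nat.choose (b - i) k : ℚ) * ω i (ℓ - i))
        = ∑ i ∈ Finset.range (ℓ + 1), (Nat.choose (b - i) k : ℚ) * ω' i (ℓ - i)) :
    ∀ k ℓ, k ≤ n - b →
      (∑ j ∈ Finset.range (ℓ + 1), (Nat.choose (n - b - j) k : ℚ) * ω (ℓ - j) j)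
        = ∑ j ∈ Finset.range (ℓ + 1), (Nat.choose (n - b - j) k : ℚ) * ω' (ℓ - j) j := by
  have main : ∀ i j, ω i j = ω' i j := by
    intro i
    induction i using Nat.strong_induction_on with
    | _ i ih =>
      intro j
      by_cases hi : b < i
      · rw [hω i j (Or.inl hi), hω' i j (Or.inl hi)]
      by_cases hj : n - b < j
      · rw [hω i j (Or.inr hj), hω' i j (Or.inr hj)]
      push_neg at hi hj
      have h0 : ∑ i' ∈ Finset.range (i + j + 1),
          ((Nat.choose (b - i') (b - i) : ℚ) * ω i' (i + j - i')
            - (Nat.choose (b - i') (b - i) : ℚ) * ω' i' (i + j - i')) = 0 := by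
        rw [Finset.sum_sub_distrib, hc (b - i) (i + j) (Nat.sub_le _ _), sub_self]
      have h1 : ∑ i' ∈ Finset.range (i + j + 1),
          ((Nat.choose (b - i') (b - i) : ℚ) * ω i' (i + j - i')
            - (Nat.choose (b - i') (b - i) : ℚ) * ω' i' (i + j - i'))
          = (Nat.choose (b - i) (b - i) : ℚ) * ω i (i + j - i)
            - (Nat.choose (b - i) (b - i) : ℚ) * ω' i (i + j - i) := by
        apply Finset.sum_eq_single_of_mem
        · simp [Finset.mem_range]
        · intro i' hi' hne
          rcases lt_or_gt_of_ne hne with hlt | hgt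
          · rcases le_or_gt (i + j - i') (n - b) with hle | hgt2
            · rw [ih i' hlt (i + j - i')]; ring
            · rw [hω i' _ (Or.inr hgt2), hω' i' _ (Or.inr hgt2)]; ring
          · rcases le_or_gt i' b with hle | hgt2
            · have : b - i' < b - i := by omega
              rw [Nat.choose_eq_zero_of_lt this]
              push_cast
              ring
            · rw [hω i' _ (Or.inl hgt2), hω' i' _ (Or.inl hgt2)]; ring
      rw [h0] at h1
      simp only [Nat.add_sub_cancel_left, Nat.choose_self, Nat.cast_one, one_mul] at h1
      linarith [h1]
  intro k ℓ hk
  exact Finset.sum_congr rfl fun j _ => by rw [main]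
end

section
/- For every k ≥ 1 there exist a tree T and a non-tree graph G, both on 4k vertices, which are cospectral for the signless Laplacian D + A. -/
open scoped Classical

/-- The signless Laplacian `D + A` of a finite simple graph, over `ℝ`. -/
noncomputable def signlessLaplacian {V : Type*} [Fintype V] (G : SimpleGraph V) :
    Matrix V V ℝ :=
  Matrix.of fun i j =>
    (if i = j then (G.degree i : ℝ) else 0) + (if G.Adj i j then 1 else 0)

open Finset Matrix SimpleGraph
open scoped Kronecker

/-- star K_{1,3} -/
def star4 : SimpleGraph (Fin 4) where
  Adj a b := a ≠ b ∧ (a = 0 ∨ b = 0)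
  symm := by constructor; rintro a b ⟨h1, h2⟩; exact ⟨h1.symm, h2.symm⟩
  loopless := by constructor; rintro a ⟨h, _⟩; exact h rfl

/-- triangle plus isolated vertex -/
def tri4 : SimpleGraph (Fin 4) where
  Adj a b := a ≠ b ∧ a ≠ 3 ∧ b ≠ 3
  symm := by constructor; rintro a b ⟨h1, h2, h3⟩; exact ⟨h1.symm, h3, h2⟩
  loopless := by constructor; rintro a ⟨h, _⟩; exact h rfl

lemma star4_adj (a b : Fin 4) : star4.Adj a b ↔ a ≠ b ∧ (a = 0 ∨ b = 0) := Iff.rfl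
lemma tri4_adj (a b : Fin 4) : tri4.Adj a b ↔ a ≠ b ∧ a ≠ 3 ∧ b ≠ 3 := Iff.rfl

lemma degree_eq_sum {V : Type*} [Fintype V] (G : SimpleGraph V) (v : V)
    [Fintype (G.neighborSet v)] :
    G.degree v = ∑ u, if G.Adj v u then 1 else 0 := by
  classical
  rw [SimpleGraph.degree]
  have : G.neighborFinset v = Finset.univ.filter (G.Adj v) := by
    ext u; simp
  rw [this, Finset.card_filter]

lemma star4_deg0 : star4.degree 0 = 3 := by
  rw [degree_eq_sum]; simp [Fin.sum_univ_four, star4]; try decide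
lemma star4_deg1 : star4.degree 1 = 1 := by
  rw [degree_eq_sum]; simp [Fin.sum_univ_four, star4]; try decide
lemma star4_deg2 : star4.degree 2 = 1 := by
  rw [degree_eq_sum]; simp [Fin.sum_univ_four, star4]; try decide
lemma star4_deg3 : star4.degree 3 = 1 := by
  rw [degree_eq_sum]; simp [Fin.sum_univ_four, star4]; try decide

lemma sL_star4 : signlessLaplacian star4 = !![3,1,1,1;1,1,0,0;1,0,1,0;1,0,0,1] := by
  ext a b
  fin_cases a <;> fin_cases b <;>
    simp [signlessLaplacian, star4_adj, star4_deg0, star4_deg1, star4_deg2, star4_deg3,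
      Matrix.cons_val', Matrix.cons_val_zero, Matrix.cons_val_one, Matrix.head_cons, Matrix.empty_val', Matrix.cons_val_fin_one, Matrix.head_fin_const, Matrix.of_apply, Matrix.transpose_apply, Matrix.vecHead, Matrix.vecTail, Matrix.transpose] <;> norm_num

lemma tri4_deg0 : tri4.degree 0 = 2 := by
  rw [degree_eq_sum]; simp [Fin.sum_univ_four, tri4]; try decide
lemma tri4_deg1 : tri4.degree 1 = 2 := by
  rw [degree_eq_sum]; simp [Fin.sum_univ_four, tri4]; try decide
lemma tri4_deg2 : tri4.degree 2 = 2 := by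
  rw [degree_eq_sum]; simp [Fin.sum_univ_four, tri4]; try decide
lemma tri4_deg3 : tri4.degree 3 = 0 := by
  rw [degree_eq_sum]; simp [Fin.sum_univ_four, tri4]; try decide

lemma sL_tri4 : signlessLaplacian tri4 = !![2,1,1,0;1,2,1,0;1,1,2,0;0,0,0,0] := by
  ext a b
  fin_cases a <;> fin_cases b <;>
    simp [signlessLaplacian, tri4_adj, tri4_deg0, tri4_deg1, tri4_deg2, tri4_deg3,
      Matrix.cons_val', Matrix.cons_val_zero, Matrix.cons_val_one, Matrix.head_cons, Matrix.empty_val', Matrix.cons_val_fin_one, Matrix.head_fin_const, Matrix.of_apply, Matrix.transpose_apply, Matrix.vecHead, Matrix.vecTail, Matrix.transpose] <;> norm_num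

noncomputable def Umat : Matrix (Fin 4) (Fin 4) ℝ :=
  !![1/2, 5/6, -1/6, -1/6;
     1/2, -1/6, 5/6, -1/6;
     1/2, -1/6, -1/6, 5/6;
     1/2, -1/2, -1/2, -1/2]

set_option maxHeartbeats 2000000 in
lemma Umat_orth : Umat * Umatᵀ = 1 := by
  ext i j
  fin_cases i <;> fin_cases j <;>
    simp [Umat, Matrix.mul_apply, Fin.sum_univ_four, Matrix.one_apply, Matrix.cons_val', Matrix.cons_val_zero, Matrix.cons_val_one, Matrix.head_cons, Matrix.empty_val', Matrix.cons_val_fin_one, Matrix.head_fin_const, Matrix.of_apply, Matrix.transpose_apply, Matrix.vecHead, Matrix.vecTail, Matrix.transpose] <;> norm_num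

set_option maxHeartbeats 2000000 in
lemma Umat_conj : Umat * signlessLaplacian star4 * Umatᵀ = signlessLaplacian tri4 := by
  rw [sL_star4, sL_tri4]
  ext i j
  fin_cases i <;> fin_cases j <;>
    simp [Umat, Matrix.mul_apply, Fin.sum_univ_four, Matrix.cons_val', Matrix.cons_val_zero, Matrix.cons_val_one, Matrix.head_cons, Matrix.empty_val', Matrix.cons_val_fin_one, Matrix.head_fin_const, Matrix.of_apply, Matrix.transpose_apply, Matrix.vecHead, Matrix.vecTail, Matrix.transpose] <;> norm_num

/-- the graph obtained by attaching a path with `n` vertices at every vertex of `G4` -/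
def big (G4 : SimpleGraph (Fin 4)) (n : ℕ) [NeZero n] : SimpleGraph (Fin 4 × Fin n) where
  Adj x y := (x.1 = y.1 ∧ (pathGraph n).Adj x.2 y.2) ∨ (x.2 = 0 ∧ y.2 = 0 ∧ G4.Adj x.1 y.1)
  symm := by
    constructor
    rintro x y (⟨h1, h2⟩ | ⟨h1, h2, h3⟩)
    · exact Or.inl ⟨h1.symm, h2.symm⟩
    · exact Or.inr ⟨h2, h1, h3.symm⟩
  loopless := by
    constructor
    rintro x (⟨_, h⟩ | ⟨_, _, h⟩)
    · exact (pathGraph _).loopless.irrefl _ h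
    · exact G4.loopless.irrefl _ h

lemma big_adj {G4 : SimpleGraph (Fin 4)} {n : ℕ} [NeZero n] {x y : Fin 4 × Fin n} :
    (big G4 n).Adj x y ↔
      (x.1 = y.1 ∧ (pathGraph n).Adj x.2 y.2) ∨ (x.2 = 0 ∧ y.2 = 0 ∧ G4.Adj x.1 y.1) :=
  Iff.rfl

lemma big_degree (G4 : SimpleGraph (Fin 4)) (n : ℕ) [NeZero n] (a : Fin 4) (i : Fin n) :
    (big G4 n).degree (a, i) =
      (pathGraph n).degree i + (if i = 0 then G4.degree a else 0) := by
  classical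
  rw [degree_eq_sum, Fintype.sum_prod_type]
  have hsplit : ∀ (b : Fin 4) (j : Fin n),
      (if (big G4 n).Adj (a, i) (b, j) then (1 : ℕ) else 0) =
        (if a = b ∧ (pathGraph n).Adj i j then 1 else 0) +
        (if i = 0 ∧ j = 0 ∧ G4.Adj a b then 1 else 0) := by
    intro b j
    by_cases h1 : a = b ∧ (pathGraph n).Adj i j <;>
      by_cases h2 : i = 0 ∧ j = 0 ∧ G4.Adj a b
    · exfalso
      have := h1.2
      rw [h2.1, h2.2.1] at this
      exact (pathGraph n).loopless.irrefl _ this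
    all_goals simp [big_adj, h1, h2]
  simp_rw [hsplit, Finset.sum_add_distrib]
  congr 1
  · have h : ∀ b : Fin 4, (∑ j, if a = b ∧ (pathGraph n).Adj i j then (1:ℕ) else 0) =
        if a = b then (pathGraph n).degree i else 0 := by
      intro b
      by_cases hab : a = b
      · simp only [hab, true_and, if_true]
        rw [degree_eq_sum]
      · simp [hab]
    simp_rw [h]
    simp
  · by_cases hi : i = 0
    · have h : ∀ b : Fin 4, (∑ j : Fin n, if i = 0 ∧ j = 0 ∧ G4.Adj a b then (1:ℕ) else 0) =
          if G4.Adj a b then 1 else 0 := by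
        intro b
        by_cases hb : G4.Adj a b
        · rw [Finset.sum_eq_single (0 : Fin n)]
          · simp [hi, hb]
          · intro c _ hc; simp [hc]
          · intro habs; exact absurd (Finset.mem_univ _) habs
        · simp [hb]
      simp_rw [h]
      rw [if_pos hi, degree_eq_sum]
    · simp [hi]

noncomputable def E00 (n : ℕ) [NeZero n] : Matrix (Fin n) (Fin n) ℝ :=
  Matrix.of fun i j => if i = 0 ∧ j = 0 then 1 else 0

lemma sL_big (G4 : SimpleGraph (Fin 4)) (n : ℕ) [NeZero n] :
    signlessLaplacian (big G4 n) =
      (signlessLaplacian G4) ⊗ₖ (E00 n) +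
        (1 : Matrix (Fin 4) (Fin 4) ℝ) ⊗ₖ signlessLaplacian (pathGraph n) := by
  ext ⟨a, i⟩ ⟨b, j⟩
  rw [Matrix.add_apply, Matrix.kronecker_apply, Matrix.kronecker_apply]
  simp only [signlessLaplacian, E00, Matrix.of_apply, Matrix.one_apply]
  by_cases hab : a = b
  · subst hab
    by_cases hij : i = j
    · subst hij
      rw [big_degree]
      have h1 : ¬ (big G4 n).Adj (a,i) (a,i) := (big G4 n).loopless.irrefl _
      have h2 : ¬ G4.Adj a a := G4.loopless.irrefl _
      have h3 : ¬ (pathGraph n).Adj i i := (pathGraph n).loopless.irrefl _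
      by_cases hi : i = 0 <;>
        simp [h1, h2, h3, hi] <;> ring
    · have h1 : (big G4 n).Adj (a,i) (a,j) ↔ (pathGraph n).Adj i j := by
        rw [big_adj]
        constructor
        · rintro (⟨_, h⟩ | ⟨h0, h0', _⟩)
          · exact h
          · exact absurd (h0.trans h0'.symm) hij
        · exact fun h => Or.inl ⟨rfl, h⟩
      have h2 : ¬ ((a,i) = (a,j)) := by simp [hij]
      have h3 : ¬ (i = 0 ∧ j = 0) := by rintro ⟨h0, h0'⟩; exact hij (h0.trans h0'.symm)
      simp [h1, h2, h3, hij]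
  · have h1 : (big G4 n).Adj (a,i) (b,j) ↔ (i = 0 ∧ j = 0 ∧ G4.Adj a b) := by
      rw [big_adj]
      constructor
      · rintro (⟨h, _⟩ | h)
        · exact absurd h hab
        · exact h
      · exact fun h => Or.inr h
    have h2 : ¬ ((a,i) = (b,j)) := by simp [hab]
    by_cases h3 : i = 0 ∧ j = 0 ∧ G4.Adj a b
    · obtain ⟨hi, hj, hadj⟩ := h3
      subst hi; subst hj
      have hadj' : (big G4 n).Adj (a, 0) (b, 0) := h1.mpr ⟨rfl, rfl, hadj⟩
      simp [h2, hab, hadj, hadj']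
    · have h4 : ¬ (i = 0 ∧ j = 0) ∨ ¬ G4.Adj a b := by tauto
      rcases h4 with h4 | h4
      · simp [h1, h2, hab, h4]
        tauto
      · simp [h1, h2, hab, h4]

lemma charpoly_conj {N : Type*} [Fintype N] [DecidableEq N] (M U : Matrix N N ℝ)
    (h : U * Uᵀ = 1) : (U * M * Uᵀ).charpoly = M.charpoly := by
  have hdet : (U.map (Polynomial.C : ℝ →+* Polynomial ℝ)).det *
      (Uᵀ.map (Polynomial.C : ℝ →+* Polynomial ℝ)).det = 1 := by
    rw [← Matrix.det_mul, ← Matrix.map_mul, h, Matrix.map_one _ (map_zero _) (map_one _),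
      Matrix.det_one]
  have e1 : (U.map (Polynomial.C : ℝ →+* Polynomial ℝ)) * Matrix.scalar N Polynomial.X *
      (Uᵀ.map (Polynomial.C : ℝ →+* Polynomial ℝ)) = Matrix.scalar N Polynomial.X := by
    rw [← (Matrix.scalar_commute Polynomial.X (fun r => Commute.all _ r)
      (U.map (Polynomial.C : ℝ →+* Polynomial ℝ))).eq, Matrix.mul_assoc, ← Matrix.map_mul, h,
      Matrix.map_one _ (map_zero _) (map_one _), Matrix.mul_one]
  have e2 : (U.map (Polynomial.C : ℝ →+* Polynomial ℝ)) * (M.map Polynomial.C) *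
      (Uᵀ.map (Polynomial.C : ℝ →+* Polynomial ℝ)) = (U * M * Uᵀ).map Polynomial.C := by
    rw [← Matrix.map_mul, ← Matrix.map_mul]
  have key : (U.map (Polynomial.C : ℝ →+* Polynomial ℝ)) * Matrix.charmatrix M *
      (Uᵀ.map (Polynomial.C : ℝ →+* Polynomial ℝ)) = Matrix.charmatrix (U * M * Uᵀ) := by
    unfold Matrix.charmatrix
    simp only [RingHom.mapMatrix_apply]
    rw [Matrix.mul_sub, Matrix.sub_mul, e1, e2]
  unfold Matrix.charpoly
  rw [← key, Matrix.det_mul, Matrix.det_mul,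
    mul_comm ((U.map (Polynomial.C : ℝ →+* Polynomial ℝ)).det), mul_assoc, hdet, mul_one]

/-- walks stay in sets closed under adjacency -/
lemma walk_mem_closed {V : Type*} {G : SimpleGraph V} {S : Set V}
    (hS : ∀ ⦃x y : V⦄, x ∈ S → G.Adj x y → y ∈ S) :
    ∀ {u v : V}, G.Walk u v → u ∈ S → v ∈ S := by
  intro u v w
  induction w with
  | nil => exact id
  | cons h p ih => exact fun hu => ih (hS hu h)

lemma not_reachable_closed {V : Type*} {G : SimpleGraph V} {S : Set V}
    (hS : ∀ ⦃x y : V⦄, x ∈ S → G.Adj x y → y ∈ S) {u v : V}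
    (hu : u ∈ S) (hv : v ∉ S) : ¬ G.Reachable u v := by
  rintro ⟨w⟩
  exact hv (walk_mem_closed hS w hu)

/-- the copy homomorphism -/
def copyHom (G4 : SimpleGraph (Fin 4)) (n : ℕ) [NeZero n] (a : Fin 4) :
    pathGraph n →g big G4 n where
  toFun j := (a, j)
  map_rel' := fun h => Or.inl ⟨rfl, h⟩

lemma big_star_connected (n : ℕ) [NeZero n] : (big star4 n).Connected := by
  have key : ∀ x : Fin 4 × Fin n, (big star4 n).Reachable x (0, 0) := by
    intro ⟨a, i⟩
    have h1 : (big star4 n).Reachable (a, i) (a, 0) :=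
      (pathGraph_preconnected n i 0).map (copyHom star4 n a)
    refine h1.trans ?_
    by_cases ha : a = 0
    · subst ha; exact Reachable.refl _
    · exact SimpleGraph.Adj.reachable (Or.inr ⟨rfl, rfl, ha, Or.inr rfl⟩)
  constructor
  intro x y
  exact (key x).trans (key y).symm

lemma big_tri_not_connected (n : ℕ) [NeZero n] : ¬ (big tri4 n).Connected := by
  intro h
  have hr := h.preconnected ((3 : Fin 4), (0 : Fin n)) ((0 : Fin 4), (0 : Fin n))
  have hS : ∀ ⦃x y : Fin 4 × Fin n⦄, x ∈ {p : Fin 4 × Fin n | p.1 = 3} →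
      (big tri4 n).Adj x y → y ∈ {p : Fin 4 × Fin n | p.1 = 3} := by
    rintro x y hx (⟨h1, _⟩ | ⟨_, _, h3, h4, _⟩)
    · exact (h1.symm.trans hx :)
    · exact absurd hx h4
  exact not_reachable_closed hS rfl (by simp) hr


lemma path_bridge_closed (n : ℕ) [NeZero n] (G4 : SimpleGraph (Fin 4)) (a : Fin 4)
    (p q : Fin n) (hpq : (p : ℕ) + 1 = (q : ℕ)) :
    ∀ ⦃x y : Fin 4 × Fin n⦄,
      x ∈ {z : Fin 4 × Fin n | z.1 = a ∧ (q : ℕ) ≤ (z.2 : ℕ)} →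
      ((big G4 n) \ SimpleGraph.fromEdgeSet {s((a, p), (a, q))}).Adj x y →
      y ∈ {z : Fin 4 × Fin n | z.1 = a ∧ (q : ℕ) ≤ (z.2 : ℕ)} := by
  rintro ⟨b, l⟩ ⟨c, l'⟩ ⟨hb, hl⟩ ⟨hadj, hne⟩
  have hb' : b = a := hb
  have hl' : (q : ℕ) ≤ (l : ℕ) := hl
  have hxy : ((b : Fin 4), l) ≠ (c, l') := (big G4 n).ne_of_adj hadj
  rcases hadj with ⟨h1, h2⟩ | ⟨h1, h2, _⟩
  · have hc : c = b := h1.symm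
    subst hc; subst hb'
    refine ⟨rfl, ?_⟩
    rw [SimpleGraph.pathGraph_adj] at h2
    rcases h2 with h2 | h2
    · change (l : ℕ) + 1 = (l' : ℕ) at h2
      change (q : ℕ) ≤ (l' : ℕ)
      omega
    · change (l' : ℕ) + 1 = (l : ℕ) at h2
      change (q : ℕ) ≤ (l' : ℕ)
      by_cases hcmp : (q : ℕ) ≤ (l' : ℕ)
      · exact hcmp
      · exfalso
        have h2' : l' = p := Fin.ext (by omega)
        have h1' : l = q := Fin.ext (by omega)
        subst h2'; subst h1'
        apply hne
        rw [SimpleGraph.fromEdgeSet_adj]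
        exact ⟨by rw [Sym2.eq_swap]; rfl, hxy⟩
  · exfalso
    have h1' : l = 0 := h1
    have : (l : ℕ) = 0 := by rw [h1']; simp
    omega

lemma star_bridge_closed (n : ℕ) [NeZero n] (b : Fin 4) (hb : b ≠ 0) :
    ∀ ⦃x y : Fin 4 × Fin n⦄,
      x ∈ {z : Fin 4 × Fin n | z.1 = b} →
      ((big star4 n) \ SimpleGraph.fromEdgeSet {s(((0 : Fin 4), (0 : Fin n)), (b, 0))}).Adj x y →
      y ∈ {z : Fin 4 × Fin n | z.1 = b} := by
  rintro ⟨c, l⟩ ⟨d, l'⟩ hc ⟨hadj, hne⟩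
  have hc' : c = b := hc
  rw [hc'] at hadj hne
  have hxy : ((b : Fin 4), l) ≠ (d, l') := (big star4 n).ne_of_adj hadj
  rcases hadj with ⟨h1, _⟩ | ⟨h1, h2, h3, h4⟩
  · exact h1.symm
  · exfalso
    have hl : l = 0 := h1
    have hl' : l' = 0 := h2
    subst hl; subst hl'
    have hd : d = 0 := by
      rcases h4 with h4 | h4
      · exact absurd h4 hb
      · exact h4
    subst hd
    apply hne
    rw [SimpleGraph.fromEdgeSet_adj]
    exact ⟨by rw [Sym2.eq_swap]; rfl, hxy⟩

lemma big_star_acyclic (n : ℕ) [NeZero n] : (big star4 n).IsAcyclic := by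
  rw [SimpleGraph.isAcyclic_iff_forall_adj_isBridge]
  rintro ⟨a, i⟩ ⟨b, j⟩ hadj
  rw [SimpleGraph.isBridge_iff]
  rcases hadj with ⟨h1, h2⟩ | ⟨h1, h2, h3⟩
  · have hb' : b = a := h1.symm
    subst hb'
    have h2' : (pathGraph n).Adj i j := h2
    rw [SimpleGraph.pathGraph_adj] at h2'
    clear h2
    rename' h2' => h2
    rcases h2 with h2 | h2
    · -- i + 1 = j
      intro hr
      refine not_reachable_closed (path_bridge_closed n star4 b i j h2)
        ⟨rfl, le_refl _⟩ ?_ hr.symm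
      rintro ⟨-, hle⟩
      have hle' : (j : ℕ) ≤ (i : ℕ) := hle
      omega
    · -- j + 1 = i
      intro hr
      have heq : s(((b : Fin 4), i), (b, j)) = s(((b : Fin 4), j), (b, i)) := Sym2.eq_swap
      rw [heq] at hr
      refine not_reachable_closed (path_bridge_closed n star4 b j i h2)
        ⟨rfl, le_refl _⟩ ?_ hr
      rintro ⟨-, hle⟩
      have hle' : (i : ℕ) ≤ (j : ℕ) := hle
      omega
  · -- star edge
    have hi : i = 0 := h1
    have hj : j = 0 := h2
    subst hi; subst hj
    obtain ⟨hne, hor⟩ := h3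
    rcases hor with ha | hb
    · have ha' : a = 0 := ha
      subst ha'
      intro hr
      have hb0 : b ≠ 0 := fun h => hne h.symm
      exact not_reachable_closed (star_bridge_closed n b hb0) rfl
        (fun hmem => hb0 ((hmem : (0 : Fin 4) = b).symm)) hr.symm
    · have hb' : b = 0 := hb
      subst hb'
      intro hr
      have ha0 : a ≠ 0 := hne
      have heq : s(((a : Fin 4), (0 : Fin n)), ((0 : Fin 4), (0 : Fin n)))
          = s(((0 : Fin 4), (0 : Fin n)), ((a : Fin 4), (0 : Fin n))) := Sym2.eq_swap
      rw [heq] at hr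
      exact not_reachable_closed (star_bridge_closed n a ha0) rfl
        (fun hmem => ha0 ((hmem : (0 : Fin 4) = a).symm)) hr

lemma big_star_isTree (n : ℕ) [NeZero n] : (big star4 n).IsTree :=
  ⟨big_star_connected n, big_star_acyclic n⟩

/-- reindexing a graph along an equivalence -/
lemma sL_comap {V W : Type*} [Fintype V] [Fintype W] [DecidableEq V] [DecidableEq W]
    (e : V ≃ W) (G : SimpleGraph W) :
    signlessLaplacian (G.comap ⇑e) = Matrix.reindex e.symm e.symm (signlessLaplacian G) := by
  have hdeg : ∀ v : V, (G.comap ⇑e).degree v = G.degree (e v) := by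
    intro v
    rw [degree_eq_sum, degree_eq_sum]
    exact Fintype.sum_equiv e _ _ (fun u => rfl)
  ext x y
  simp only [signlessLaplacian, Matrix.reindex_apply, Matrix.submatrix_apply, Matrix.of_apply,
    SimpleGraph.comap_adj, Equiv.symm_symm, hdeg]
  congr 1
  by_cases h : x = y
  · subst h; simp; convert hdeg x
  · rw [if_neg h, if_neg (fun he => h (e.injective he))]

def graphIsoComap {V W : Type*} (e : V ≃ W) (G : SimpleGraph W) : (G.comap ⇑e) ≃g G :=
  ⟨e, Iff.rfl⟩

lemma isAcyclic_of_iso {V W : Type*} {G : SimpleGraph V} {H : SimpleGraph W}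
    (φ : G ≃g H) (h : H.IsAcyclic) : G.IsAcyclic := by
  intro v c hc
  exact h (c.map φ.toHom) (hc.map (φ.toEquiv.injective))

lemma isTree_of_iso {V W : Type*} {G : SimpleGraph V} {H : SimpleGraph W}
    (φ : G ≃g H) (h : H.IsTree) : G.IsTree :=
  ⟨(SimpleGraph.Iso.connected_iff φ).mpr h.isConnected, isAcyclic_of_iso φ h.2⟩


theorem stmt_19 (k : ℕ) (hk : 1 ≤ k) :
    ∃ T G : SimpleGraph (Fin (4 * k)), T.IsTree ∧ ¬G.IsTree ∧
      (signlessLaplacian T).charpoly = (signlessLaplacian G).charpoly := by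
  obtain ⟨m, rfl⟩ : ∃ m, k = m + 1 := ⟨k - 1, by omega⟩
  haveI : NeZero (m + 1) := ⟨m.succ_ne_zero⟩
  let e : Fin (4 * (m + 1)) ≃ Fin 4 × Fin (m + 1) := finProdFinEquiv.symm
  refine ⟨(big star4 (m + 1)).comap ⇑e, (big tri4 (m + 1)).comap ⇑e, ?_, ?_, ?_⟩
  · exact isTree_of_iso (graphIsoComap e _) (big_star_isTree (m + 1))
  · intro h
    exact big_tri_not_connected (m + 1)
      ((SimpleGraph.Iso.connected_iff (graphIsoComap e _)).mp h.isConnected)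
  · rw [sL_comap, sL_comap, Matrix.charpoly_reindex, Matrix.charpoly_reindex,
      sL_big star4 (m + 1), sL_big tri4 (m + 1)]
    have hK : (Umat ⊗ₖ (1 : Matrix (Fin (m + 1)) (Fin (m + 1)) ℝ)) *
        (Umat ⊗ₖ (1 : Matrix (Fin (m + 1)) (Fin (m + 1)) ℝ))ᵀ = 1 := by
      rw [← Matrix.kroneckerMap_transpose, Matrix.transpose_one, ← Matrix.mul_kronecker_mul,
        Umat_orth, Matrix.one_mul, Matrix.one_kronecker_one]
    have key : (Umat ⊗ₖ (1 : Matrix (Fin (m + 1)) (Fin (m + 1)) ℝ)) *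
        ((signlessLaplacian star4) ⊗ₖ (E00 (m + 1)) +
          (1 : Matrix (Fin 4) (Fin 4) ℝ) ⊗ₖ signlessLaplacian (pathGraph (m + 1))) *
        (Umat ⊗ₖ (1 : Matrix (Fin (m + 1)) (Fin (m + 1)) ℝ))ᵀ =
        (signlessLaplacian tri4) ⊗ₖ (E00 (m + 1)) +
          (1 : Matrix (Fin 4) (Fin 4) ℝ) ⊗ₖ signlessLaplacian (pathGraph (m + 1)) := by
      rw [← Matrix.kroneckerMap_transpose, Matrix.transpose_one, Matrix.mul_add, Matrix.add_mul,
        ← Matrix.mul_kronecker_mul, ← Matrix.mul_kronecker_mul,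
        ← Matrix.mul_kronecker_mul, ← Matrix.mul_kronecker_mul,
        Matrix.one_mul, Matrix.mul_one, Matrix.mul_one, Matrix.mul_one, Matrix.one_mul, Umat_conj, Umat_orth]
    rw [← key, charpoly_conj _ _ hK]
end
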